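/- Let R be a commutative ring and g = Σ_{n≥1} aₙtⁿ ∈ R[[t]] a formal power series with zero constant term whose linear coefficient a₁ is a unit of R. Then for all Laurent series a, b ∈ R((t)): Res( (a∘g) · (b∘g)' ) = Res( a · b' ). (Invariance of the residue pairing Res(a db) under formal reparametrization; this is Proposition 1.3.7(b) expressed in coordinates: the transgressed forms τ(ω) are invariant under the action of K = Aut ℂ[[t]].) -/

import Mathlib

/-- The formal derivative `a ↦ a'` on formal Laurent series:
the coefficient of `a'` at `n` is `(n+1) · a_{n+1}`. -/
noncomputable def lderiv {R : Type*} [CommRing R] (a : LaurentSeries R) : LaurentSeries R where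
  coeff n := (n + 1) • a.coeff (n + 1)
  isPWO_support' := by
    have hsub : (Function.support fun n : ℤ => (n + 1) • a.coeff (n + 1)) ⊆
        (fun n : ℤ => n - 1) '' a.support := by
      intro n hn
      refine ⟨n + 1, ?_, by ring⟩
      intro hz
      exact hn (by simp [Function.mem_support, hz])
    exact ((a.isPWO_support.image_of_monotoneOn
      (fun x _ y _ hxy => by simpa using hxy : MonotoneOn (fun n : ℤ => n - 1) a.support)).mono
      hsub)

/-- The residue of a formal Laurent series: the coefficient of `t⁻¹`. -/
def res {R : Type*} [CommRing R] (a : LaurentSeries R) : R := a.coeff (-1)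

namespace ResAux

open HahnSeries PowerSeries Finset

variable {R : Type*} [CommRing R]

lemma lderiv_coeff (a : LaurentSeries R) (n : ℤ) :
    (lderiv a).coeff n = (n + 1) • a.coeff (n + 1) := rfl

/-- coefficient at a point as an additive monoid hom -/
def coeffHom (i : ℤ) : LaurentSeries R →+ R :=
  AddMonoidHom.mk' (fun x => x.coeff i) (fun _ _ => HahnSeries.coeff_add)

lemma res_smul (m : ℤ) (x : LaurentSeries R) : res (m • x) = m • res x :=
  map_zsmul (coeffHom (-1)) m x

lemma res_mul_lderiv (x y : LaurentSeries R) (F : Finset ℤ)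
    (hF : ∀ i : ℤ, x.coeff i ≠ 0 → y.coeff (-i) ≠ 0 → i ∈ F) :
    res (x * lderiv y) = ∑ i ∈ F, ((-i : ℤ) : R) * (x.coeff i * y.coeff (-i)) := by
  classical
  have hterm : ∀ i : ℤ, x.coeff i * (lderiv y).coeff (-1 - i) =
      ((-i : ℤ) : R) * (x.coeff i * y.coeff (-i)) := by
    intro i
    rw [lderiv_coeff, show (-1 : ℤ) - i + 1 = -i by ring, zsmul_eq_mul]
    push_cast
    ring
  have hsub : Finset.antidiagonal x.isPWO_support (lderiv y).isPWO_support (-1)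
      ⊆ F.image (fun i : ℤ => (i, -1 - i)) := by
    intro ij hij
    rw [Finset.mem_addAntidiagonal] at hij
    obtain ⟨h1, h2, h3⟩ := hij
    have hij2 : ij.2 = -1 - ij.1 := by omega
    have h2' : y.coeff (-ij.1) ≠ 0 := by
      rw [HahnSeries.mem_support, hij2, lderiv_coeff] at h2
      intro h
      apply h2
      rw [show (-1 : ℤ) - ij.1 + 1 = -ij.1 by ring, h, smul_zero]
    rw [Finset.mem_image]
    exact ⟨ij.1, hF ij.1 h1 h2', by rw [← hij2]⟩
  rw [res, HahnSeries.coeff_mul, Finset.sum_subset hsub]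
  · rw [Finset.sum_image (by intro p _ q _ h; exact (Prod.mk.injEq _ _ _ _ ▸ h).1)]
    exact Finset.sum_congr rfl fun i _ => hterm i
  · intro ij hij hnot
    rw [Finset.mem_image] at hij
    obtain ⟨i, _, rfl⟩ := hij
    rw [Finset.mem_addAntidiagonal] at hnot
    simp only [HahnSeries.mem_support, not_and, ne_eq, not_not] at hnot
    by_cases hx : x.coeff i = 0
    · rw [hx, zero_mul]
    · have hz : (lderiv y).coeff (-1 - i) = 0 := by
        by_contra h
        exact hnot hx h (by ring)
      show x.coeff i * (lderiv y).coeff (-1 - i) = 0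
      rw [hz, mul_zero]
lemma shift (k : ℤ) (f : R⟦X⟧) (m : ℤ) :
    ((single k (1 : R) : LaurentSeries R) * (f : LaurentSeries R)).coeff (m + k) =
      if m < 0 then 0 else PowerSeries.coeff m.natAbs f := by
  rw [HahnSeries.coeff_single_mul_add, one_mul, PowerSeries.coeff_coe]

lemma shift' (k : ℤ) (f : R⟦X⟧) (m : ℤ) :
    ((single k (1 : R) : LaurentSeries R) * (f : LaurentSeries R)).coeff m =
      if m - k < 0 then 0 else PowerSeries.coeff (m - k).natAbs f := by
  have := shift k f (m - k)
  rwa [sub_add_cancel] at this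

/-- power rule for `derivativeFun` -/
lemma dpow (f : R⟦X⟧) (n : ℕ) :
    derivativeFun (f ^ (n + 1)) = (n + 1 : ℕ) • (f ^ n * derivativeFun f) := by
  induction n with
  | zero => simp
  | succ n ih =>
    rw [pow_succ, derivativeFun_mul, ih]
    simp only [smul_eq_mul, nsmul_eq_mul]
    push_cast
    ring

lemma coeff_dF (f : R⟦X⟧) (n : ℕ) :
    PowerSeries.coeff n (derivativeFun f) = PowerSeries.coeff (n + 1) f * (n + 1) :=
  coeff_derivative f n

/-- the universal identity `coeff_{k+1}(s^{k+1}) = coeff_k (s^k s')`, valid over any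
commutative ring. -/
lemma univP (k : ℕ) (s : R⟦X⟧) :
    PowerSeries.coeff (k + 1) (s ^ (k + 1)) =
      PowerSeries.coeff k (s ^ k * derivativeFun s) := by
  set A := MvPolynomial ℕ ℤ with hA
  set S : A⟦X⟧ := PowerSeries.mk fun n => MvPolynomial.X n with hS
  set φ : A →+* R :=
    MvPolynomial.eval₂Hom (Int.castRingHom R) (fun n => PowerSeries.coeff n s) with hφ
  have hmap : PowerSeries.map φ S = s := by
    ext n
    rw [PowerSeries.coeff_map, hS, PowerSeries.coeff_mk, hφ, MvPolynomial.eval₂Hom_X']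
  have hd : ∀ f : A⟦X⟧,
      PowerSeries.map φ (derivativeFun f) = derivativeFun (PowerSeries.map φ f) := by
    intro f
    ext n
    simp only [coeff_dF, PowerSeries.coeff_map, map_mul, map_natCast, map_add, map_one]
  have key : PowerSeries.coeff (k + 1) (S ^ (k + 1)) =
      PowerSeries.coeff k (S ^ k * derivativeFun S) := by
    have h1 : PowerSeries.coeff k (derivativeFun (S ^ (k + 1))) =
        PowerSeries.coeff (k + 1) (S ^ (k + 1)) * ((k : A) + 1) := by
      exact_mod_cast coeff_dF (S ^ (k + 1)) k
    have h2 : PowerSeries.coeff k (derivativeFun (S ^ (k + 1))) =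
        PowerSeries.coeff k (S ^ k * derivativeFun S) * ((k : A) + 1) := by
      rw [dpow, map_nsmul, nsmul_eq_mul]
      push_cast
      try ring
    have hne : ((k : A) + 1) ≠ 0 := by
      have : ((k + 1 : ℕ) : A) ≠ 0 := Nat.cast_ne_zero.mpr (Nat.succ_ne_zero k)
      push_cast at this
      exact this
    exact mul_right_cancel₀ hne (h1.symm.trans h2)
  have e1 : s ^ (k + 1) = PowerSeries.map φ (S ^ (k + 1)) := by
    rw [RingHom.map_pow, hmap]
  have e2 : s ^ k * derivativeFun s = PowerSeries.map φ (S ^ k * derivativeFun S) := by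
    rw [RingHom.map_mul, RingHom.map_pow, hmap, hd, hmap]
  rw [e1, e2, PowerSeries.coeff_map, PowerSeries.coeff_map, key]

lemma lderiv_single_mul_coe (k : ℤ) (f : R⟦X⟧) :
    lderiv ((single k (1 : R) : LaurentSeries R) * (f : LaurentSeries R)) =
      (single (k - 1) (1 : R) : LaurentSeries R) *
        ((k • f + X * derivativeFun f : R⟦X⟧) : LaurentSeries R) := by
  ext m
  rw [lderiv_coeff, shift', shift']
  have hidx : m - (k - 1) = m + 1 - k := by ring
  rw [hidx]
  by_cases hj : m + 1 - k < 0
  · rw [if_pos hj, if_pos hj, smul_zero]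
  · rw [if_neg hj, if_neg hj]
    push_neg at hj
    rw [map_add, map_zsmul]
    rcases hc : (m + 1 - k).natAbs with _ | r
    · rw [coeff_zero_X_mul, add_zero]
      have hk : k = m + 1 := by omega
      rw [hk]
    · rw [coeff_succ_X_mul, coeff_dF]
      have hm : m + 1 = k + ((r : ℤ) + 1) := by omega
      have hmr : (m : R) + 1 = (k : R) + ((r : R) + 1) := by
        have := congrArg (fun z : ℤ => (z : R)) hm
        push_cast at this
        exact this
      simp only [zsmul_eq_mul]
      push_cast
      linear_combination (PowerSeries.coeff (r + 1) f) * hmr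

noncomputable def Wfun {R : Type*} [CommRing R] (w s : R⟦X⟧) (n : ℤ) : R⟦X⟧ :=
  if 0 ≤ n then w ^ n.toNat else s ^ (-n).toNat

section UnitRep

variable (u : (LaurentSeries R)ˣ) (w s : R⟦X⟧)
variable (hu2 : (u : LaurentSeries R) = (single 1 (1 : R) : LaurentSeries R) * (w : LaurentSeries R))
variable (hws : w * s = 1)

include hu2 hws

lemma uinv : ((u⁻¹ : (LaurentSeries R)ˣ) : LaurentSeries R) =
    (single (-1) (1 : R) : LaurentSeries R) * (s : LaurentSeries R) := by
  apply Units.inv_eq_of_mul_eq_one_right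
  rw [hu2]
  calc (single 1 (1:R) : LaurentSeries R) * (w : LaurentSeries R) *
        ((single (-1) (1:R) : LaurentSeries R) * (s : LaurentSeries R))
      = ((single 1 (1:R) : LaurentSeries R) * (single (-1) (1:R) : LaurentSeries R)) *
        ((w : LaurentSeries R) * (s : LaurentSeries R)) := by ring
    _ = 1 := by
        rw [HahnSeries.single_mul_single, ← PowerSeries.coe_mul, hws, PowerSeries.coe_one,
          mul_one, one_mul]
        norm_num [HahnSeries.single_zero_one]

lemma rep (n : ℤ) : ((u ^ n : (LaurentSeries R)ˣ) : LaurentSeries R) =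
    (single n (1 : R) : LaurentSeries R) * ((Wfun w s n : R⟦X⟧) : LaurentSeries R) := by
  rcases le_or_gt 0 n with hn | hn
  · lift n to ℕ using hn with k
    rw [zpow_natCast, Units.val_pow_eq_pow_val, hu2, mul_pow, HahnSeries.single_pow,
      ← PowerSeries.coe_pow, Wfun, if_pos (by positivity : (0:ℤ) ≤ (k:ℤ)), Int.toNat_natCast]
    simp
  · have hk : n = -(((-n).toNat : ℕ) : ℤ) := by omega
    rw [hk, zpow_neg, zpow_natCast, ← inv_pow, Units.val_pow_eq_pow_val, uinv u w s hu2 hws,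
      mul_pow, HahnSeries.single_pow, ← PowerSeries.coe_pow]
    have hcond : ¬ (0:ℤ) ≤ -(((-n).toNat : ℕ) : ℤ) := by omega
    rw [Wfun, if_neg hcond]
    simp only [nsmul_eq_mul, mul_neg, mul_one, one_pow, neg_neg, Int.toNat_natCast]

end UnitRep

variable (u : (LaurentSeries R)ˣ) (w s : R⟦X⟧)
variable (hu2 : (u : LaurentSeries R) = (single 1 (1 : R) : LaurentSeries R) * (w : LaurentSeries R))
variable (hws : w * s = 1)

section Wlemmas

include hws

lemma Wmul (n : ℤ) : Wfun w s n = Wfun w s (n - 1) * w := by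
  have hsw : s * w = 1 := by rw [mul_comm]; exact hws
  rcases le_or_gt 1 n with hn | hn
  · rw [Wfun, Wfun, if_pos (by omega : (0:ℤ) ≤ n), if_pos (by omega : (0:ℤ) ≤ n - 1)]
    have h : n.toNat = (n - 1).toNat + 1 := by omega
    rw [h, pow_succ]
  · rw [Wfun, Wfun, if_neg (by omega : ¬ (0:ℤ) ≤ n - 1)]
    have h1 : (-(n - 1)).toNat = (-n).toNat + 1 := by omega
    rw [h1, pow_succ, mul_assoc, hsw, mul_one]
    by_cases h0 : n = 0
    · subst h0; norm_num
    · rw [if_neg (by omega)]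

lemma hkeylem : w * derivativeFun s + s * derivativeFun w = 0 := by
  have h := derivativeFun_mul w s
  rw [hws, derivativeFun_one, smul_eq_mul, smul_eq_mul] at h
  exact h.symm

lemma Wd (n : ℤ) :
    derivativeFun (Wfun w s n) * w = n • (Wfun w s n * derivativeFun w) := by
  have hkey := hkeylem w s hws
  rcases le_or_gt 0 n with hn | hn
  · rw [Wfun, if_pos hn]
    rcases hk : n.toNat with _ | j
    · have h0 : n = 0 := by omega
      subst h0
      simp [derivativeFun_one]
    · rw [dpow]
      have hn' : n = (j : ℤ) + 1 := by omega
      rw [hn']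
      simp only [nsmul_eq_mul, zsmul_eq_mul]
      push_cast
      ring
  · rw [Wfun, if_neg (by omega)]
    rcases hk : (-n).toNat with _ | j
    · omega
    · rw [dpow]
      have hn' : n = -((j : ℤ) + 1) := by omega
      rw [hn']
      simp only [nsmul_eq_mul, zsmul_eq_mul]
      push_cast
      linear_combination (((j : R⟦X⟧) + 1) * s ^ j) * hkey

end Wlemmas

section Ulemmas

include hu2 hws

omit hws in
lemma lderiv_coe_u : lderiv ((u : LaurentSeries R)) =
    ((w + X * derivativeFun w : R⟦X⟧) : LaurentSeries R) := by
  rw [hu2, lderiv_single_mul_coe, show (1:ℤ) - 1 = 0 by norm_num, HahnSeries.single_zero_one,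
    one_mul, one_zsmul]

lemma lderiv_u_zpow (m : ℤ) :
    lderiv ((u ^ m : (LaurentSeries R)ˣ) : LaurentSeries R) =
      m • (((u ^ (m - 1) : (LaurentSeries R)ˣ) : LaurentSeries R) *
        lderiv (u : LaurentSeries R)) := by
  rw [rep u w s hu2 hws m, lderiv_single_mul_coe, rep u w s hu2 hws (m - 1),
    lderiv_coe_u u w hu2]
  have PS : m • Wfun w s m + X * derivativeFun (Wfun w s m) =
      m • (Wfun w s (m - 1) * (w + X * derivativeFun w)) := by
    have h1 : Wfun w s m = Wfun w s (m - 1) * w := Wmul w s hws m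
    have h2 : derivativeFun (Wfun w s (m - 1)) * w =
        (m - 1) • (Wfun w s (m - 1) * derivativeFun w) := Wd w s hws (m - 1)
    rw [h1, derivativeFun_mul]
    simp only [smul_eq_mul, zsmul_eq_mul] at h2 ⊢
    push_cast at h2 ⊢
    linear_combination X * h2
  rw [mul_assoc, ← PowerSeries.coe_mul, ← mul_smul_comm,
    ← map_zsmul (HahnSeries.ofPowerSeries ℤ R) m (Wfun w s (m - 1) * (w + X * derivativeFun w)),
    PS]

lemma res_key (k : ℤ) :
    res (((u ^ k : (LaurentSeries R)ˣ) : LaurentSeries R) * lderiv (u : LaurentSeries R)) =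
      if k = -1 then 1 else 0 := by
  have hkey := hkeylem w s hws
  have hsw : s * w = 1 := by rw [mul_comm]; exact hws
  have epow : ∀ t : ℕ, s ^ (t + 1) * w = s ^ t := by
    intro t
    rw [pow_succ, mul_assoc, hsw, mul_one]
  rw [rep u w s hu2 hws k, lderiv_coe_u u w hu2, mul_assoc, ← PowerSeries.coe_mul,
    res, shift']
  rcases le_or_gt 0 k with hk | hk
  · rw [if_pos (by omega : (-1:ℤ) - k < 0), if_neg (by omega : ¬ k = -1)]
  · rw [if_neg (by omega : ¬ ((-1:ℤ) - k < 0))]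
    have hW : Wfun w s k = s ^ (-k).toNat := by rw [Wfun, if_neg (by omega)]
    rw [hW]
    rcases hj : (-k).toNat with _ | j
    · omega
    · have hidx : (-1 - k).natAbs = j := by omega
      rw [hidx]
      have e1 : s ^ (j + 1) * (w + X * derivativeFun w) =
          s ^ j + X * (s ^ (j + 1) * derivativeFun w) := by
        have := epow j
        rw [mul_add]
        rw [this]
        ring
      rw [e1, map_add]
      rcases hj0 : j with _ | i
      · rw [if_pos (by omega : k = -1)]
        simp
      · rw [if_neg (by omega : ¬ k = -1), coeff_succ_X_mul]
        have e2 : s ^ (i + 1 + 1) * derivativeFun w = -(s ^ i * derivativeFun s) := by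
          linear_combination s ^ (i + 1) * hkey - derivativeFun s * epow i
        rw [e2, map_neg, univP i s]
        exact add_neg_cancel _

lemma coeff_u_zpow {n m : ℤ} (h : m < n) :
    ((u ^ n : (LaurentSeries R)ˣ) : LaurentSeries R).coeff m = 0 := by
  rw [rep u w s hu2 hws n, shift', if_pos (by omega)]

lemma res_uu (n m : ℤ) :
    res (((u ^ n : (LaurentSeries R)ˣ) : LaurentSeries R) *
        lderiv ((u ^ m : (LaurentSeries R)ˣ) : LaurentSeries R)) =
      if n + m = 0 then (m : R) else 0 := by
  rw [lderiv_u_zpow u w s hu2 hws m, mul_smul_comm, res_smul]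
  have hmul : ((u ^ n : (LaurentSeries R)ˣ) : LaurentSeries R) *
      ((u ^ (m - 1) : (LaurentSeries R)ˣ) : LaurentSeries R) =
      ((u ^ (n + (m - 1)) : (LaurentSeries R)ˣ) : LaurentSeries R) := by
    rw [← Units.val_mul, ← zpow_add]
  rw [← mul_assoc, hmul, res_key u w s hu2 hws (n + (m - 1))]
  by_cases h : n + m = 0
  · rw [if_pos (by omega : n + (m - 1) = -1), if_pos h, zsmul_eq_mul, mul_one]
  · rw [if_neg (by omega : ¬ n + (m - 1) = -1), if_neg h, smul_zero]

end Ulemmas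

end ResAux

open HahnSeries PowerSeries Finset ResAux

/-- Invariance of the residue pairing `Res(a db)` under formal reparametrization
(Proposition 1.3.7(b) in coordinates): let `g = Σ_{n≥1} aₙtⁿ ∈ R[[t]]` have zero constant
term and unit linear coefficient, so that `g` is a unit `u` of `R((t))` and for any Laurent
series `h` the substitution `h∘g := Σₙ hₙ·gⁿ` is the (unique) `t`-adic limit of the partial
sums `Σ_{n₀ ≤ n ≤ M} hₙ·gⁿ`. If `A = a∘g` and `B = b∘g`, then
`Res((a∘g)·(b∘g)') = Res(a·b')`. -/
theorem res_pairing_invariant_under_substitution (R : Type*) [CommRing R] (g : PowerSeries R)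
    (h0 : PowerSeries.constantCoeff g = 0) (h1 : IsUnit (PowerSeries.coeff 1 g))
    (u : (LaurentSeries R)ˣ) (hu : (u : LaurentSeries R) = (g : LaurentSeries R))
    (a b A B : LaurentSeries R)
    (hA : ∀ m : ℤ, ∃ N : ℤ, ∀ M : ℤ, N ≤ M →
      (∑ n ∈ Finset.Icc a.order M,
        a.coeff n • ((u ^ n : (LaurentSeries R)ˣ) : LaurentSeries R)).coeff m = A.coeff m)
    (hB : ∀ m : ℤ, ∃ N : ℤ, ∀ M : ℤ, N ≤ M →
      (∑ n ∈ Finset.Icc b.order M,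
        b.coeff n • ((u ^ n : (LaurentSeries R)ˣ) : LaurentSeries R)).coeff m = B.coeff m) :
    res (A * lderiv B) = res (a * lderiv b) := by

  classical
  -- set up the power series picture : `g = X * w` with `w` a unit
  set w : R⟦X⟧ := PowerSeries.mk fun n => PowerSeries.coeff (n + 1) g with hwdef
  have hgw : g = X * w := by
    ext n
    cases n with
    | zero => rw [coeff_zero_X_mul, PowerSeries.coeff_zero_eq_constantCoeff]; exact h0
    | succ n => rw [coeff_succ_X_mul, hwdef, PowerSeries.coeff_mk]
  have hwu : IsUnit w := by
    rw [PowerSeries.isUnit_iff_constantCoeff]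
    have : PowerSeries.constantCoeff w = PowerSeries.coeff 1 g := by
      rw [← PowerSeries.coeff_zero_eq_constantCoeff_apply, hwdef, PowerSeries.coeff_mk]
    rw [this]
    exact h1
  obtain ⟨s, hws⟩ := hwu.exists_right_inv
  have hu2 : (u : LaurentSeries R) =
      (single 1 (1 : R) : LaurentSeries R) * (w : LaurentSeries R) := by
    rw [hu, hgw, PowerSeries.coe_mul, PowerSeries.coe_X]
  -- the coefficient formula for A and B
  have coeffgen : ∀ (c C : LaurentSeries R),
      (∀ m : ℤ, ∃ N : ℤ, ∀ M : ℤ, N ≤ M →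
        (∑ n ∈ Finset.Icc c.order M,
          c.coeff n • ((u ^ n : (LaurentSeries R)ˣ) : LaurentSeries R)).coeff m = C.coeff m) →
      ∀ m M : ℤ, m ≤ M → C.coeff m = ∑ n ∈ Finset.Icc c.order M,
          c.coeff n * ((u ^ n : (LaurentSeries R)ˣ) : LaurentSeries R).coeff m := by
    intro c C hC m M hmM
    obtain ⟨N, hN⟩ := hC m
    have hstep := hN (max M N) (le_max_right _ _)
    have hsum : ∀ T : Finset ℤ,
        (∑ n ∈ T, c.coeff n • ((u ^ n : (LaurentSeries R)ˣ) : LaurentSeries R)).coeff m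
          = ∑ n ∈ T, c.coeff n * ((u ^ n : (LaurentSeries R)ˣ) : LaurentSeries R).coeff m := by
      intro T
      rw [show (∑ n ∈ T, c.coeff n • ((u ^ n : (LaurentSeries R)ˣ) : LaurentSeries R)).coeff m
          = (coeffHom m) (∑ n ∈ T, c.coeff n • ((u ^ n : (LaurentSeries R)ˣ) : LaurentSeries R))
          from rfl, map_sum]
      apply Finset.sum_congr rfl
      intro n _
      show (c.coeff n • ((u ^ n : (LaurentSeries R)ˣ) : LaurentSeries R)).coeff m = _
      rw [HahnSeries.coeff_smul, smul_eq_mul]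
    rw [hsum] at hstep
    rw [← hstep]
    refine (Finset.sum_subset (Finset.Icc_subset_Icc_right (le_max_left M N)) ?_).symm
    intro n hn hnot
    have hmn : m < n := by
      simp only [Finset.mem_Icc] at hn hnot
      omega
    rw [coeff_u_zpow u w s hu2 hws hmn, mul_zero]
  have coeffA := coeffgen a A hA
  have coeffB := coeffgen b B hB
  have suppgen : ∀ (c C : LaurentSeries R),
      (∀ m M : ℤ, m ≤ M → C.coeff m = ∑ n ∈ Finset.Icc c.order M,
          c.coeff n * ((u ^ n : (LaurentSeries R)ˣ) : LaurentSeries R).coeff m) →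
      ∀ m : ℤ, m < c.order → C.coeff m = 0 := by
    intro c C hC m hm
    rw [hC m c.order (le_of_lt hm)]
    apply Finset.sum_eq_zero
    intro n hn
    have hmn : m < n := by
      simp only [Finset.mem_Icc] at hn
      omega
    rw [coeff_u_zpow u w s hu2 hws hmn, mul_zero]
  have suppA := suppgen a A coeffA
  have suppB := suppgen b B coeffB
  -- the finite window
  set F : Finset ℤ := Finset.Icc a.order (-b.order) with hF
  set M0 : ℤ := max (-a.order) (-b.order) with hM0
  have hM0a : -a.order ≤ M0 := le_max_left _ _
  have hM0b : -b.order ≤ M0 := le_max_right _ _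
  set Ia : Finset ℤ := Finset.Icc a.order M0 with hIa
  set Ib : Finset ℤ := Finset.Icc b.order M0 with hIb
  have Step1 : res (a * lderiv b) = ∑ i ∈ F, ((-i : ℤ) : R) * (a.coeff i * b.coeff (-i)) := by
    apply res_mul_lderiv
    intro i hx hy
    rw [hF, Finset.mem_Icc]
    have h1 := HahnSeries.order_le_of_coeff_ne_zero hx
    have h2 := HahnSeries.order_le_of_coeff_ne_zero hy
    omega
  have Step2 : res (A * lderiv B) = ∑ i ∈ F, ((-i : ℤ) : R) * (A.coeff i * B.coeff (-i)) := by
    apply res_mul_lderiv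
    intro i hx hy
    rw [hF, Finset.mem_Icc]
    constructor
    · by_contra h
      exact hx (suppA i (by omega))
    · by_contra h
      exact hy (suppB (-i) (by omega))
  rw [Step2, Step1]
  calc ∑ i ∈ F, ((-i : ℤ) : R) * (A.coeff i * B.coeff (-i))
      = ∑ i ∈ F, ∑ n ∈ Ia, ∑ m ∈ Ib, (a.coeff n * b.coeff m) *
          (((-i : ℤ) : R) * (((u ^ n : (LaurentSeries R)ˣ) : LaurentSeries R).coeff i *
            ((u ^ m : (LaurentSeries R)ˣ) : LaurentSeries R).coeff (-i))) := by
        apply Finset.sum_congr rfl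
        intro i hi
        rw [hF, Finset.mem_Icc] at hi
        rw [coeffA i M0 (by omega), coeffB (-i) M0 (by omega), Finset.sum_mul_sum,
          Finset.mul_sum]
        apply Finset.sum_congr rfl
        intro n _
        rw [Finset.mul_sum]
        apply Finset.sum_congr rfl
        intro m _
        ring
    _ = ∑ n ∈ Ia, ∑ m ∈ Ib, ∑ i ∈ F, (a.coeff n * b.coeff m) *
          (((-i : ℤ) : R) * (((u ^ n : (LaurentSeries R)ˣ) : LaurentSeries R).coeff i *
            ((u ^ m : (LaurentSeries R)ˣ) : LaurentSeries R).coeff (-i))) := by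
        rw [Finset.sum_comm]
        apply Finset.sum_congr rfl
        intro n _
        rw [Finset.sum_comm]
    _ = ∑ n ∈ Ia, ∑ m ∈ Ib, (a.coeff n * b.coeff m) *
          res (((u ^ n : (LaurentSeries R)ˣ) : LaurentSeries R) *
            lderiv ((u ^ m : (LaurentSeries R)ˣ) : LaurentSeries R)) := by
        apply Finset.sum_congr rfl
        intro n hn
        apply Finset.sum_congr rfl
        intro m hm
        rw [hIa, Finset.mem_Icc] at hn
        rw [hIb, Finset.mem_Icc] at hm
        rw [← Finset.mul_sum]
        congr 1
        refine (res_mul_lderiv _ _ F ?_).symm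
        intro i hx hy
        rw [hF, Finset.mem_Icc]
        constructor
        · by_contra h
          exact hx (coeff_u_zpow u w s hu2 hws (by omega))
        · by_contra h
          exact hy (coeff_u_zpow u w s hu2 hws (by omega))
    _ = ∑ n ∈ Ia, ∑ m ∈ Ib, (a.coeff n * b.coeff m) *
          (if n + m = 0 then (m : R) else 0) := by
        apply Finset.sum_congr rfl
        intro n _
        apply Finset.sum_congr rfl
        intro m _
        rw [res_uu u w s hu2 hws n m]
    _ = ∑ n ∈ Ia, if -n ∈ Ib then (a.coeff n * b.coeff (-n)) * ((-n : ℤ) : R) else 0 := by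
        apply Finset.sum_congr rfl
        intro n _
        have hterm : ∀ m : ℤ, (a.coeff n * b.coeff m) * (if n + m = 0 then (m : R) else 0)
            = if m = -n then (a.coeff n * b.coeff m) * ((m : ℤ) : R) else 0 := by
          intro m
          by_cases h : m = -n
          · rw [if_pos h, if_pos (by omega : n + m = 0)]
          · rw [if_neg h, if_neg (by omega : ¬ n + m = 0), mul_zero]
        rw [Finset.sum_congr rfl (fun m _ => hterm m)]
        exact Finset.sum_ite_eq' Ib (-n) (fun m => (a.coeff n * b.coeff m) * ((m : ℤ) : R))
    _ = ∑ i ∈ F, ((-i : ℤ) : R) * (a.coeff i * b.coeff (-i)) := by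
        rw [← Finset.sum_filter]
        have hFeq : Finset.filter (fun n => -n ∈ Ib) Ia = F := by
          ext n
          rw [Finset.mem_filter, hF, hIa, hIb, Finset.mem_Icc, Finset.mem_Icc, Finset.mem_Icc]
          omega
        rw [hFeq]
        apply Finset.sum_congr rfl
        intro i _
        ring
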